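/- Any extremal polynomial T for the weighted residual problem has at least n+1 extreme points: if K ⊂ ℂ is compact, ρ : K → [0,∞) upper semicontinuous and positive at ≥ n+1 points, z₀ ∈ ℂ̄ \ K, and T ∈ 𝒫_{n,z₀} attains ‖T‖_ρ = t_n(ρ, z₀), then the set {z ∈ K : ρ(z)|T(z)| = t_n(ρ, z₀)} contains at least n+1 distinct points. -/

import Mathlib

section Helpers
open Filter Polynomial

lemma usc_mul_cont {s : Set ℂ} {f : ℂ → ℝ} (hf : UpperSemicontinuousOn f s)
    (hf0 : ∀ z ∈ s, 0 ≤ f z) {u : ℂ → ℝ} (hu : Continuous u) (hu0 : ∀ z, 0 ≤ u z) :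
    UpperSemicontinuousOn (fun z => f z * u z) s := by
  intro x hx y hy
  have hy' : f x * u x < y := hy
  set a := f x with ha
  set b := u x with hb
  have ha0 : 0 ≤ a := hf0 x hx
  have hb0 : 0 ≤ b := hu0 x
  obtain ⟨ε, hε0, hε1, hεy⟩ : ∃ ε : ℝ, 0 < ε ∧ ε ≤ 1 ∧ (a + ε) * (b + ε) < y := by
    refine ⟨min 1 ((y - a * b) / (a + b + 2)), ?_, min_le_left _ _, ?_⟩
    · exact lt_min one_pos (div_pos (by linarith) (by linarith))
    · have h1 : min 1 ((y - a * b) / (a + b + 2)) ≤ (y - a * b) / (a + b + 2) :=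
        min_le_right _ _
      have h2 : min 1 ((y - a * b) / (a + b + 2)) ≤ 1 := min_le_left _ _
      have h3 : 0 < min 1 ((y - a * b) / (a + b + 2)) :=
        lt_min one_pos (div_pos (by linarith) (by linarith))
      have h4 : (y - a * b) / (a + b + 2) * (a + b + 2) = y - a * b := by
        field_simp
      nlinarith
  have h1 : ∀ᶠ z in nhdsWithin x s, f z < a + ε := hf x hx (a + ε) (by linarith)
  have h2 : ∀ᶠ z in nhdsWithin x s, u z < b + ε := by
    have : ∀ᶠ z in nhds x, u z < b + ε := (hu.continuousAt).eventually_lt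
      continuousAt_const (by linarith)
    exact this.filter_mono nhdsWithin_le_nhds
  have h3 : ∀ᶠ z in nhdsWithin x s, z ∈ s := eventually_mem_nhdsWithin
  filter_upwards [h1, h2, h3] with z hz1 hz2 hz3
  have e1 : f z * u z ≤ f z * (b + ε) :=
    mul_le_mul_of_nonneg_left (le_of_lt hz2) (hf0 z hz3)
  have e2 : f z * (b + ε) < (a + ε) * (b + ε) :=
    mul_lt_mul_of_pos_right hz1 (by linarith)
  show f z * u z < y
  linarith

lemma usc_exists_max {s : Set ℂ} (hs : IsCompact s) (hne : s.Nonempty) {f : ℂ → ℝ}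
    (hf : UpperSemicontinuousOn f s) : ∃ x ∈ s, ∀ y ∈ s, f y ≤ f x := by
  by_contra hcon
  push_neg at hcon
  choose Y hYs hYlt using hcon
  have key : ∀ x (hx : x ∈ s), ∃ u : Set ℂ, IsOpen u ∧ x ∈ u ∧
      ∀ z ∈ u ∩ s, f z < f (Y x hx) := by
    intro x hx
    have := hf x hx (f (Y x hx)) (hYlt x hx)
    rw [eventually_nhdsWithin_iff] at this
    obtain ⟨u, hus, huo, hxu⟩ := eventually_nhds_iff.mp this
    exact ⟨u, huo, hxu, fun z hz => hus z hz.1 hz.2⟩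
  choose u huo hxu hub using key
  obtain ⟨t, hts⟩ := hs.elim_nhds_subcover' u (fun x hx => (huo x hx).mem_nhds (hxu x hx))
  have htne : t.Nonempty := by
    by_contra h
    rw [Finset.not_nonempty_iff_eq_empty] at h
    subst h
    obtain ⟨z0, hz0⟩ := hne
    simpa using hts hz0
  obtain ⟨x0, hx0t, hx0max⟩ := t.exists_max_image (fun x => f (Y x.1 x.2)) htne
  have hy0 : Y x0.1 x0.2 ∈ s := hYs _ _
  obtain ⟨x1, hx1, hmem⟩ := Set.mem_iUnion₂.mp (hts hy0)
  have h1 : f (Y x0.1 x0.2) < f (Y x1.1 x1.2) := hub x1.1 x1.2 _ ⟨hmem, hy0⟩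
  have h2 : f (Y x1.1 x1.2) ≤ f (Y x0.1 x0.2) := hx0max x1 hx1
  linarith

lemma usc_superlevel_compact {s : Set ℂ} (hs : IsCompact s) {f : ℂ → ℝ}
    (hf : UpperSemicontinuousOn f s) (c : ℝ) : IsCompact {z ∈ s | c ≤ f z} := by
  have key : ∀ x (hx : x ∈ s) (h : f x < c), ∃ u : Set ℂ, IsOpen u ∧ x ∈ u ∧
      ∀ z ∈ u ∩ s, f z < c := by
    intro x hx h
    have := hf x hx c h
    rw [eventually_nhdsWithin_iff] at this
    obtain ⟨u, hus, huo, hxu⟩ := eventually_nhds_iff.mp this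
    exact ⟨u, huo, hxu, fun z hz => hus z hz.1 hz.2⟩
  choose u huo hxu hub using key
  have heq : {z ∈ s | c ≤ f z} =
      s ∩ (⋃ (x : ℂ) (hx : x ∈ s) (h : f x < c), u x hx h)ᶜ := by
    ext z
    simp only [Set.mem_setOf_eq, Set.mem_inter_iff, Set.mem_compl_iff, Set.mem_iUnion]
    constructor
    · rintro ⟨hzs, hzc⟩
      refine ⟨hzs, ?_⟩
      rintro ⟨x, hx, h, hzu⟩
      exact absurd hzc (not_le.mpr (hub x hx h z ⟨hzu, hzs⟩))
    · rintro ⟨hzs, hz⟩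
      refine ⟨hzs, ?_⟩
      by_contra hc
      push_neg at hc
      exact hz ⟨z, hzs, hc, hxu z hzs hc⟩
  rw [heq]
  exact hs.inter_right (isOpen_iUnion fun x => isOpen_iUnion fun hx =>
    isOpen_iUnion fun h => huo x hx h).isClosed_compl

end Helpers


open MeasureTheory

/-- The weighted sup-norm `‖P‖_ρ = sup_{z ∈ K} ρ(z) |P(z)|` of a polynomial on `K`. -/
noncomputable def wsup (K : Set ℂ) (ρ : ℂ → ℝ) (P : Polynomial ℂ) : ℝ :=
  sSup ((fun z => ρ z * ‖P.eval z‖) '' K)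

/-- The admissible class `𝒫_{n,z₀}`: polynomials of degree `≤ n` normalized at `z₀` when
`z₀ = some w` is a finite point, and monic polynomials of degree `n` when `z₀ = none` (i.e.
`z₀ = ∞`). -/
def AdmissiblePoly (n : ℕ) (z₀ : Option ℂ) (P : Polynomial ℂ) : Prop :=
  match z₀ with
  | some w => P.natDegree ≤ n ∧ P.eval w = 1
  | none => P.Monic ∧ P.natDegree = n

/-- The weighted Chebyshev/residual extremal value `t_n(ρ, z₀)`. -/
noncomputable def tExtremal (K : Set ℂ) (ρ : ℂ → ℝ) (n : ℕ) (z₀ : Option ℂ) : ℝ :=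
  sInf {t : ℝ | ∃ P : Polynomial ℂ, AdmissiblePoly n z₀ P ∧ t = wsup K ρ P}

/-- Any extremal polynomial for the weighted residual/Chebyshev problem has at least `n+1`
extreme points: if `T ∈ 𝒫_{n,z₀}` attains `‖T‖_ρ = t_n(ρ, z₀)`, then the set
`{z ∈ K : ρ(z)|T(z)| = t_n(ρ, z₀)}` contains at least `n+1` distinct points. -/
theorem extremal_poly_extreme_points
    (K : Set ℂ) (hK : IsCompact K)
    (ρ : ℂ → ℝ) (hρusc : UpperSemicontinuousOn ρ K) (hρ0 : ∀ z ∈ K, 0 ≤ ρ z)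
    (n : ℕ)
    (hpos : ∃ S : Finset ℂ, n + 1 ≤ S.card ∧ ↑S ⊆ K ∧ ∀ z ∈ S, 0 < ρ z)
    (z₀ : Option ℂ) (hz₀ : ∀ w, z₀ = some w → w ∉ K)
    (T : Polynomial ℂ) (hTadm : AdmissiblePoly n z₀ T)
    (hTmin : wsup K ρ T = tExtremal K ρ n z₀) :
    ∃ S : Finset ℂ, S.card = n + 1 ∧
      ↑S ⊆ {z ∈ K | ρ z * ‖T.eval z‖ = tExtremal K ρ n z₀} := by
  classical
  set t := tExtremal K ρ n z₀ with ht
  obtain ⟨S0, hS0card, hS0K, hS0pos⟩ := hpos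
  have hKne : K.Nonempty := by
    obtain ⟨z, hz⟩ := Finset.card_pos.mp (lt_of_lt_of_le (Nat.succ_pos n) hS0card)
    exact ⟨z, hS0K hz⟩
  have husc : ∀ P : Polynomial ℂ,
      UpperSemicontinuousOn (fun z => ρ z * ‖P.eval z‖) K := fun P =>
    usc_mul_cont hρusc hρ0 (continuous_norm.comp (P.continuous))
      (fun z => norm_nonneg _)
  have hwle : ∀ P : Polynomial ℂ, ∀ z ∈ K, ρ z * ‖P.eval z‖ ≤ wsup K ρ P := by
    intro P z hz
    obtain ⟨x, hx, hmax⟩ := usc_exists_max hK hKne (husc P)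
    refine le_csSup ⟨ρ x * ‖P.eval x‖, ?_⟩ ⟨z, hz, rfl⟩
    rintro y ⟨w, hw, rfl⟩
    exact hmax w hw
  have hwnonneg : ∀ P : Polynomial ℂ, 0 ≤ wsup K ρ P := by
    intro P
    apply Real.sSup_nonneg
    rintro x ⟨z, hz, rfl⟩
    exact mul_nonneg (hρ0 z hz) (norm_nonneg _)
  have hTle : T.natDegree ≤ n := by
    cases z₀ with
    | some w => exact hTadm.1
    | none => exact le_of_eq hTadm.2
  have hTne : T ≠ 0 := by
    cases z₀ with
    | some w =>
      intro h
      have := hTadm.2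
      rw [h] at this
      simp at this
    | none => exact hTadm.1.ne_zero
  have htpos : 0 < t := by
    obtain ⟨z, hzS, hzT⟩ : ∃ z ∈ S0, T.eval z ≠ 0 := by
      by_contra hc
      push_neg at hc
      exact hTne (Polynomial.eq_zero_of_natDegree_lt_card_of_eval_eq_zero' T S0 hc
        (lt_of_le_of_lt hTle (by omega)))
    have h1 : 0 < ρ z * ‖T.eval z‖ :=
      mul_pos (hS0pos z hzS) (norm_pos_iff.mpr hzT)
    have h2 := hwle T z (hS0K hzS)
    rw [hTmin] at h2
    linarith
  set g := fun z => ρ z * ‖T.eval z‖ with hg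
  by_contra hcon
  have hEfin : {z ∈ K | g z = t}.Finite := by
    by_contra hinf
    obtain ⟨S, hSsub, hScard⟩ :=
      Set.Infinite.exists_subset_card_eq (hinf : Set.Infinite _) (n + 1)
    exact hcon ⟨S, hScard, hSsub⟩
  set F := hEfin.toFinset with hF
  have hFmem : ∀ z, z ∈ F ↔ z ∈ K ∧ g z = t := by
    intro z
    rw [hF, Set.Finite.mem_toFinset]
    exact Iff.rfl
  have hFcard : F.card ≤ n := by
    by_contra hc
    push_neg at hc
    obtain ⟨S, hSsub, hScard⟩ := Finset.exists_subset_card_eq hc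
    refine hcon ⟨S, hScard, ?_⟩
    intro z hz
    exact (hFmem z).mp (hSsub hz)
  have hFK : ∀ z ∈ F, z ∈ K := fun z hz => ((hFmem z).mp hz).1
  -- construct the interpolation polynomial q
  obtain ⟨q, hqF, hqadm⟩ : ∃ q : Polynomial ℂ, (∀ z ∈ F, q.eval z = T.eval z) ∧
      ∀ ε : ℝ, 0 < ε → ε ≤ 1 → AdmissiblePoly n z₀ (T - Polynomial.C (ε : ℂ) * q) := by
    cases z₀ with
    | some w =>
      have hwK : w ∉ K := hz₀ w rfl
      have hwF : w ∉ F := fun h => hwK (hFK _ h)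
      set nodes := insert w F with hnodes
      set r : ℂ → ℂ := fun z => if z = w then 0 else T.eval z with hrdef
      set q := Lagrange.interpolate nodes id r with hq
      have hinj : Set.InjOn id (nodes : Set ℂ) := Set.injOn_id _
      have hdeg : q.degree < (nodes.card : WithBot ℕ) :=
        Lagrange.degree_interpolate_lt _ hinj
      have hcard : nodes.card ≤ n + 1 := by
        rw [hnodes, Finset.card_insert_of_notMem hwF]
        omega
      have hqdeg : q.natDegree ≤ n := by
        rcases eq_or_ne q 0 with h | h
        · simp [h]
        · have h2 : q.degree < ((n + 1 : ℕ) : WithBot ℕ) :=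
            lt_of_lt_of_le hdeg (by exact_mod_cast hcard)
          have := (Polynomial.natDegree_lt_iff_degree_lt h).mpr h2
          omega
      have hqFv : ∀ z ∈ F, q.eval z = T.eval z := by
        intro z hz
        have hzw : z ≠ w := fun e => hwF (e ▸ hz)
        have := Lagrange.eval_interpolate_at_node (r := r) hinj
          (Finset.mem_insert_of_mem hz : z ∈ nodes)
        rw [hq]
        simpa [hrdef, hzw] using this
      have hqw : q.eval w = 0 := by
        have := Lagrange.eval_interpolate_at_node (r := r) hinj
          (Finset.mem_insert_self w F : w ∈ nodes)
        rw [hq]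
        simpa [hrdef] using this
      refine ⟨q, hqFv, fun ε hε0 hε1 => ⟨?_, ?_⟩⟩
      · refine le_trans (Polynomial.natDegree_sub_le _ _) (max_le hTadm.1 ?_)
        exact le_trans (Polynomial.natDegree_C_mul_le _ _) hqdeg
      · simp [Polynomial.eval_sub, Polynomial.eval_mul, hqw, hTadm.2]
    | none =>
      obtain ⟨hmon, hdegT⟩ := hTadm
      set q := Lagrange.interpolate F id (fun z => T.eval z) with hq
      have hdeg : q.degree < (F.card : WithBot ℕ) :=
        Lagrange.degree_interpolate_lt _ (Set.injOn_id _)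
      have hTdeg : T.degree = (n : WithBot ℕ) := by
        rw [Polynomial.degree_eq_natDegree hTne, hdegT]
      have hqFv : ∀ z ∈ F, q.eval z = T.eval z := by
        intro z hz
        have := Lagrange.eval_interpolate_at_node (r := fun z => T.eval z)
          (Set.injOn_id _) hz
        rw [hq]
        simpa using this
      refine ⟨q, hqFv, fun ε hε0 hε1 => ?_⟩
      have hdlt : (Polynomial.C (ε : ℂ) * q).degree < T.degree := by
        refine lt_of_le_of_lt (le_trans (Polynomial.degree_mul_le _ _)
          (by simpa using add_le_add_left Polynomial.degree_C_le q.degree)) ?_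
        rw [hTdeg]
        exact lt_of_lt_of_le hdeg (by exact_mod_cast hFcard)
      have hmon' : (T - Polynomial.C (ε : ℂ) * q).Monic := by
        rw [sub_eq_add_neg]
        exact hmon.add_of_left (by rwa [Polynomial.degree_neg])
      refine ⟨hmon', ?_⟩
      have hdeq : (T - Polynomial.C (ε : ℂ) * q).degree = T.degree :=
        Polynomial.degree_sub_eq_left_of_degree_lt hdlt
      have := Polynomial.natDegree_eq_of_degree_eq hdeq
      rw [this, hdegT]
  -- the perturbation argument
  set h := fun z => ρ z * ‖(T - q).eval z‖ with hh
  have hhusc : UpperSemicontinuousOn h K :=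
    usc_mul_cont hρusc hρ0 (continuous_norm.comp ((T - q).continuous))
      (fun z => norm_nonneg _)
  have hhE : ∀ z ∈ F, h z = 0 := by
    intro z hz
    simp [hh, Polynomial.eval_sub, hqF z hz]
  set B := {z ∈ K | t / 2 ≤ h z} with hB
  have hBcomp : IsCompact B := usc_superlevel_compact hK hhusc (t / 2)
  have hBK : B ⊆ K := fun z hz => hz.1
  obtain ⟨s₁, hs₁t, hs₁⟩ : ∃ s₁, s₁ < t ∧ ∀ z ∈ B, g z ≤ s₁ := by
    rcases B.eq_empty_or_nonempty with hBe | hBne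
    · exact ⟨0, htpos, by simp [hBe]⟩
    · obtain ⟨x, hxB, hmax⟩ := usc_exists_max hBcomp hBne ((husc T).mono hBK)
      refine ⟨g x, ?_, hmax⟩
      have hle : g x ≤ t := hTmin ▸ hwle T x (hBK hxB)
      rcases lt_or_eq_of_le hle with hlt | heq
      · exact hlt
      · exfalso
        have hxF : x ∈ F := (hFmem x).mpr ⟨hBK hxB, heq⟩
        have h0 := hhE x hxF
        have h1 : t / 2 ≤ h x := hxB.2
        linarith
  set M := wsup K ρ q with hM
  have hMq : ∀ z ∈ K, ρ z * ‖q.eval z‖ ≤ M := hwle q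
  have hM0 : 0 ≤ M := hwnonneg q
  set ε := min 1 ((t - s₁) / (2 * (M + 1))) with hε
  have hε0 : 0 < ε := lt_min one_pos (div_pos (by linarith) (by linarith))
  have hε1 : ε ≤ 1 := min_le_left _ _
  have hεM : s₁ + ε * M < t := by
    have h1 : ε ≤ (t - s₁) / (2 * (M + 1)) := min_le_right _ _
    have h2 : ε * M ≤ (t - s₁) / (2 * (M + 1)) * M :=
      mul_le_mul_of_nonneg_right h1 hM0
    have h3 : (t - s₁) / (2 * (M + 1)) * M < t - s₁ := by
      rw [div_mul_eq_mul_div, div_lt_iff₀ (by linarith)]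
      nlinarith
    linarith
  set P := T - Polynomial.C (ε : ℂ) * q with hP
  have hPadm := hqadm ε hε0 hε1
  set r := max (s₁ + ε * M) (t - ε * (t / 2)) with hr
  have hrt : r < t := by
    apply max_lt hεM
    nlinarith
  have habs : ∀ x : ℂ, ‖(ε : ℂ) * x‖ = ε * ‖x‖ := by
    intro x
    rw [norm_mul, Complex.norm_real, Real.norm_eq_abs, abs_of_pos hε0]
  have hbound : ∀ z ∈ K, ρ z * ‖P.eval z‖ ≤ r := by
    intro z hz
    have hevalP : P.eval z = T.eval z - (ε : ℂ) * q.eval z := by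
      simp [hP]
    by_cases hzB : z ∈ B
    · have htri : ‖P.eval z‖ ≤
          ‖T.eval z‖ + ε * ‖q.eval z‖ := by
        rw [hevalP, ← habs]
        exact (norm_sub_le _ _)
      calc ρ z * ‖P.eval z‖
          ≤ ρ z * (‖T.eval z‖ + ε * ‖q.eval z‖) :=
            mul_le_mul_of_nonneg_left htri (hρ0 z hz)
        _ = g z + ε * (ρ z * ‖q.eval z‖) := by ring
        _ ≤ s₁ + ε * M := add_le_add (hs₁ z hzB)
            (mul_le_mul_of_nonneg_left (hMq z hz) hε0.le)
        _ ≤ r := le_max_left _ _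
    · have hhz : h z < t / 2 := by
        by_contra hc
        push_neg at hc
        exact hzB ⟨hz, hc⟩
      have hgz : g z ≤ t := hTmin ▸ hwle T z hz
      have key : ‖P.eval z‖ ≤
          (1 - ε) * ‖T.eval z‖ + ε * ‖(T - q).eval z‖ := by
        have hsplit : P.eval z =
            ((1 - ε : ℝ) : ℂ) * T.eval z + (ε : ℂ) * ((T - q).eval z) := by
          rw [hevalP, Polynomial.eval_sub]
          push_cast
          ring
        rw [hsplit]
        refine le_trans (norm_add_le _ _) ?_
        rw [norm_mul, norm_mul, Complex.norm_real, Complex.norm_real, Real.norm_eq_abs, Real.norm_eq_abs,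
          abs_of_nonneg (by linarith : (0:ℝ) ≤ 1 - ε), abs_of_pos hε0]
      calc ρ z * ‖P.eval z‖
          ≤ ρ z * ((1 - ε) * ‖T.eval z‖ + ε * ‖(T - q).eval z‖) :=
            mul_le_mul_of_nonneg_left key (hρ0 z hz)
        _ = (1 - ε) * g z + ε * h z := by ring
        _ ≤ (1 - ε) * t + ε * (t / 2) :=
            add_le_add (mul_le_mul_of_nonneg_left hgz (by linarith))
              (mul_le_mul_of_nonneg_left hhz.le hε0.le)
        _ = t - ε * (t / 2) := by ring
        _ ≤ r := le_max_right _ _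
  have hws : wsup K ρ P ≤ r := by
    apply csSup_le (hKne.image _)
    rintro x ⟨z, hz, rfl⟩
    exact hbound z hz
  have hmem : wsup K ρ P ∈
      {t' : ℝ | ∃ P' : Polynomial ℂ, AdmissiblePoly n z₀ P' ∧ t' = wsup K ρ P'} :=
    ⟨P, hPadm, rfl⟩
  have hbdd : BddBelow
      {t' : ℝ | ∃ P' : Polynomial ℂ, AdmissiblePoly n z₀ P' ∧ t' = wsup K ρ P'} := by
    refine ⟨0, ?_⟩
    rintro x ⟨P', _, rfl⟩
    exact hwnonneg P'
  have hfin : t ≤ wsup K ρ P := csInf_le hbdd hmem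
  linarith
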